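/- Let S = [[J_k(λ), a, C], [0, λ, bᵀ], [0, 0, J_k(λ)]] ∈ ℂ^{(2k+1)×(2k+1)} with a, b ∈ ℂ^k, C ∈ ℂ^{k×k}. If b₁ = e₁ᵀb ≠ 0 and a_k = e_kᵀa ≠ 0, then the eigenspace of S for λ is one-dimensional, spanned by (e₁, 0, 0). -/

import Mathlib

open Matrix

def jordanBlock (k : ℕ) (x : ℂ) : Matrix (Fin k) (Fin k) ℂ :=
  Matrix.of fun i j => if i = j then x else if (i : ℕ) + 1 = (j : ℕ) then 1 else 0

def mkS (k : ℕ) (lam : ℂ) (a b : Fin k → ℂ) (C : Matrix (Fin k) (Fin k) ℂ) :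
    Matrix (Fin k ⊕ (Fin 1 ⊕ Fin k)) (Fin k ⊕ (Fin 1 ⊕ Fin k)) ℂ :=
  Matrix.fromBlocks (jordanBlock k lam)
    (Matrix.of fun i j => Sum.elim (fun _ => a i) (fun j' => C i j') j)
    0
    (Matrix.fromBlocks (Matrix.of fun _ _ => lam) (Matrix.of fun _ j => b j)
      0 (jordanBlock k lam))

lemma sum_shift {k : ℕ} (i : Fin k) (x : Fin k → ℂ) :
    (∑ j : Fin k, if (i:ℕ) + 1 = (j:ℕ) then x j else 0)
      = if h : (i:ℕ)+1 < k then x ⟨(i:ℕ)+1, h⟩ else 0 := by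
  split
  · rename_i h
    rw [Finset.sum_eq_single (⟨(i:ℕ)+1, h⟩ : Fin k)]
    · simp
    · intro j _ hj
      have : ¬ ((i:ℕ) + 1 = (j:ℕ)) := by
        intro hc; apply hj; apply Fin.ext; simp; omega
      simp [this]
    · simp
  · rename_i h
    apply Finset.sum_eq_zero
    intro j _
    have : ¬ ((i:ℕ) + 1 = (j:ℕ)) := by have := j.isLt; omega
    simp [this]

lemma mulVec_inl {k : ℕ} (lam : ℂ) (a b : Fin k → ℂ) (C : Matrix (Fin k) (Fin k) ℂ)
    (v : Fin k ⊕ (Fin 1 ⊕ Fin k) → ℂ) (i : Fin k) :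
    (mkS k lam a b C - lam • 1).mulVec v (Sum.inl i)
      = (if h : (i:ℕ)+1 < k then v (Sum.inl ⟨(i:ℕ)+1, h⟩) else 0)
        + a i * v (Sum.inr (Sum.inl 0))
        + ∑ j : Fin k, C i j * v (Sum.inr (Sum.inr j)) := by
  have key : ∀ x : Fin k, (if i = x then lam * v (Sum.inl x) else
      if (i:ℕ) + 1 = (x:ℕ) then v (Sum.inl x) else 0)
      = (if i = x then lam * v (Sum.inl x) else 0)
        + (if (i:ℕ) + 1 = (x:ℕ) then v (Sum.inl x) else 0) := by
    intro x
    rcases eq_or_ne i x with h | h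
    · subst h
      have : ¬ ((i:ℕ) + 1 = (i:ℕ)) := by omega
      simp [this]
    · simp [h]
  simp only [Matrix.mulVec, dotProduct, Fintype.sum_sum_type, mkS, jordanBlock,
    Matrix.fromBlocks, Matrix.one_apply, Fin.sum_univ_one, Matrix.sub_apply,
    Matrix.smul_apply, Matrix.of_apply, Sum.elim_inl, Sum.elim_inr, smul_eq_mul,
    mul_ite, mul_one, mul_zero, sub_mul, ite_mul, zero_mul, one_mul,
    Finset.sum_sub_distrib, Finset.sum_ite_eq', Sum.inl.injEq, reduceCtorEq,
    if_false, Finset.sum_const_zero, add_zero, zero_add, Finset.mem_univ, if_true]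
  simp only [key, Finset.sum_add_distrib, Finset.sum_ite_eq', Finset.mem_univ, if_true,
    sum_shift]
  ring

lemma mulVec_mid {k : ℕ} (lam : ℂ) (a b : Fin k → ℂ) (C : Matrix (Fin k) (Fin k) ℂ)
    (v : Fin k ⊕ (Fin 1 ⊕ Fin k) → ℂ) :
    (mkS k lam a b C - lam • 1).mulVec v (Sum.inr (Sum.inl 0))
      = ∑ j : Fin k, b j * v (Sum.inr (Sum.inr j)) := by
  simp [Matrix.mulVec, dotProduct, Fintype.sum_sum_type, mkS,
    Matrix.fromBlocks, Matrix.one_apply, Fin.sum_univ_one, sub_mul]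

lemma mulVec_inr {k : ℕ} (lam : ℂ) (a b : Fin k → ℂ) (C : Matrix (Fin k) (Fin k) ℂ)
    (v : Fin k ⊕ (Fin 1 ⊕ Fin k) → ℂ) (i : Fin k) :
    (mkS k lam a b C - lam • 1).mulVec v (Sum.inr (Sum.inr i))
      = (if h : (i:ℕ)+1 < k then v (Sum.inr (Sum.inr ⟨(i:ℕ)+1, h⟩)) else 0) := by
  have key : ∀ x : Fin k, (if i = x then lam * v (Sum.inr (Sum.inr x)) else
      if (i:ℕ) + 1 = (x:ℕ) then v (Sum.inr (Sum.inr x)) else 0)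
      = (if i = x then lam * v (Sum.inr (Sum.inr x)) else 0)
        + (if (i:ℕ) + 1 = (x:ℕ) then v (Sum.inr (Sum.inr x)) else 0) := by
    intro x
    rcases eq_or_ne i x with h | h
    · subst h
      have : ¬ ((i:ℕ) + 1 = (i:ℕ)) := by omega
      simp [this]
    · simp [h]
  simp only [Matrix.mulVec, dotProduct, Fintype.sum_sum_type, mkS, jordanBlock,
    Matrix.fromBlocks, Matrix.one_apply, Fin.sum_univ_one, Matrix.sub_apply,
    Matrix.smul_apply, Matrix.of_apply, Sum.elim_inl, Sum.elim_inr, smul_eq_mul,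
    mul_ite, mul_one, mul_zero, sub_mul, ite_mul, zero_mul, one_mul,
    Finset.sum_sub_distrib, Finset.sum_ite_eq', Matrix.zero_apply, Sum.inr.injEq,
    Sum.inl.injEq, reduceCtorEq, if_false, Finset.sum_const_zero, add_zero, zero_add,
    Finset.mem_univ, if_true]
  simp only [key, Finset.sum_add_distrib, Finset.sum_ite_eq', Finset.mem_univ, if_true,
    sum_shift]
  ring

/-- If `b₁ ≠ 0` and `a_k ≠ 0`, the eigenspace of `S` for `λ` is spanned by
`(e₁, 0, 0)`. -/
theorem eigenspace_odd_case {k : ℕ} (hk : 0 < k)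
    (lam : ℂ) (a b : Fin k → ℂ) (C : Matrix (Fin k) (Fin k) ℂ)
    (hb : b ⟨0, hk⟩ ≠ 0) (ha : a ⟨k - 1, by omega⟩ ≠ 0) :
    LinearMap.ker ((mkS k lam a b C
        - lam • (1 : Matrix (Fin k ⊕ (Fin 1 ⊕ Fin k))
            (Fin k ⊕ (Fin 1 ⊕ Fin k)) ℂ)).mulVecLin)
      = Submodule.span ℂ
          {Sum.elim (Pi.single (⟨0, hk⟩ : Fin k) (1 : ℂ))
            (0 : Fin 1 ⊕ Fin k → ℂ)} := by
  set e : Fin k ⊕ (Fin 1 ⊕ Fin k) → ℂ :=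
    Sum.elim (Pi.single (⟨0, hk⟩ : Fin k) (1 : ℂ)) (0 : Fin 1 ⊕ Fin k → ℂ) with he
  apply le_antisymm
  · intro v hv
    rw [LinearMap.mem_ker] at hv
    have hv' : ∀ idx, (mkS k lam a b C - lam • 1).mulVec v idx = 0 := by
      intro idx
      have := congrFun hv idx
      simpa only [Matrix.mulVecLin_apply, Pi.zero_apply] using this
    have hw1 : ∀ j : Fin k, (j:ℕ) ≠ 0 → v (Sum.inr (Sum.inr j)) = 0 := by
      intro j hj
      have hjlt := j.isLt
      have hlt : ((j:ℕ) - 1) + 1 < k := by omega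
      have h1 := hv' (Sum.inr (Sum.inr ⟨(j:ℕ)-1, by omega⟩))
      rw [mulVec_inr] at h1
      rw [dif_pos hlt] at h1
      have e1 : (⟨((j:ℕ)-1)+1, hlt⟩ : Fin k) = j := Fin.ext (by simp; omega)
      rwa [e1] at h1
    have hw : ∀ j : Fin k, v (Sum.inr (Sum.inr j)) = 0 := by
      intro j
      rcases eq_or_ne ((j:ℕ)) 0 with h | h
      · have ej : j = ⟨0, hk⟩ := Fin.ext h
        have h2 := hv' (Sum.inr (Sum.inl 0))
        rw [mulVec_mid] at h2
        rw [Finset.sum_eq_single (⟨0, hk⟩ : Fin k)] at h2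
        · rw [ej]; exact (mul_eq_zero.mp h2).resolve_left hb
        · intro j' _ hj'
          rw [hw1 j' (fun hc => hj' (Fin.ext hc)), mul_zero]
        · simp
      · exact hw1 j h
    have hs : v (Sum.inr (Sum.inl 0)) = 0 := by
      have h3 := hv' (Sum.inl ⟨k-1, by omega⟩)
      rw [mulVec_inl] at h3
      rw [dif_neg (by simp; omega)] at h3
      simp only [hw, mul_zero, Finset.sum_const_zero, add_zero, zero_add] at h3
      exact (mul_eq_zero.mp h3).resolve_left ha
    have hu : ∀ j : Fin k, (j:ℕ) ≠ 0 → v (Sum.inl j) = 0 := by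
      intro j hj
      have hjlt := j.isLt
      have hlt : ((j:ℕ) - 1) + 1 < k := by omega
      have h4 := hv' (Sum.inl ⟨(j:ℕ)-1, by omega⟩)
      rw [mulVec_inl] at h4
      rw [dif_pos hlt] at h4
      have e1 : (⟨((j:ℕ)-1)+1, hlt⟩ : Fin k) = j := Fin.ext (by simp; omega)
      rw [e1, hs] at h4
      simp only [hw, mul_zero, Finset.sum_const_zero, add_zero] at h4
      exact h4
    rw [Submodule.mem_span_singleton]
    refine ⟨v (Sum.inl ⟨0, hk⟩), ?_⟩
    funext idx
    rcases idx with i | j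
    · simp only [Pi.smul_apply, he, Sum.elim_inl, smul_eq_mul]
      rcases eq_or_ne i (⟨0, hk⟩ : Fin k) with h | h
      · subst h; simp
      · rw [Pi.single_eq_of_ne h, mul_zero, hu i (fun hc => h (Fin.ext hc))]
    · rcases j with j | j
      · have : j = 0 := Subsingleton.elim _ _
        subst this
        simp only [Pi.smul_apply, he, Sum.elim_inr, Pi.zero_apply, smul_eq_mul,
          mul_zero, hs]
      · simp only [Pi.smul_apply, he, Sum.elim_inr, Pi.zero_apply, smul_eq_mul,
          mul_zero, hw j]
  · rw [Submodule.span_le, Set.singleton_subset_iff]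
    rw [SetLike.mem_coe, LinearMap.mem_ker]
    have : (mkS k lam a b C - lam • 1).mulVecLin e = (mkS k lam a b C - lam • 1).mulVec e :=
      rfl
    rw [this]
    funext idx
    rcases idx with i | j
    · rw [mulVec_inl]
      simp only [he, Sum.elim_inl, Sum.elim_inr, Pi.zero_apply, mul_zero,
        Finset.sum_const_zero, add_zero, Pi.zero_apply]
      split
      · rename_i h
        rw [Pi.single_eq_of_ne (by intro hc; simp at hc) 1]
      · simp
    · rcases j with j | j
      · have : j = 0 := Subsingleton.elim _ _
        subst this
        rw [mulVec_mid]
        simp [he]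
      · rw [mulVec_inr]
        simp [he]
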